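/- Let X be a standard Borel space, let p, q, m, n be probability measures on X, and let s be a coupling of p and q, t a coupling of q and m, and u a coupling of m and n. Then composition of couplings is associative: (u ∘ t) ∘ s = u ∘ (t ∘ s) as measures on X × X. -/

import Mathlib

open MeasureTheory ProbabilityTheory
open scoped ENNReal

variable {X : Type*} [MeasurableSpace X] [StandardBorelSpace X] [Nonempty X]

/-- The composite `t ∘ s` of couplings: push `q ⊗ (s⃖ ×ₖ t⃗)` onto the outer two coordinates,
where `q = s.snd` is the middle measure. -/
noncomputable def coupComp (t s : Measure (X × X)) [IsFiniteMeasure s] [IsFiniteMeasure t] :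
    Measure (X × X) :=
  (s.snd.compProd ((s.map Prod.swap).condKernel ×ₖ t.condKernel)).map Prod.snd

instance coupComp.instIsFiniteMeasure (t s : Measure (X × X))
    [IsFiniteMeasure s] [IsFiniteMeasure t] : IsFiniteMeasure (coupComp t s) := by
  unfold coupComp; infer_instance

set_option linter.unusedSectionVars false

/-- Two finite measures on a product space that agree on measurable rectangles are equal. -/
lemma meas_prod_ext {μ ν : Measure (X × X)} [IsFiniteMeasure μ] [IsFiniteMeasure ν]
    (h : ∀ A C : Set X, MeasurableSet A → MeasurableSet C → μ (A ×ˢ C) = ν (A ×ˢ C)) :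
    μ = ν := by
  refine MeasureTheory.ext_of_generate_finite _ generateFrom_prod.symm isPiSystem_prod ?_ ?_
  · rintro _ ⟨A, hA, C, hC, rfl⟩
    exact h A C hA hC
  · simpa using h Set.univ Set.univ MeasurableSet.univ MeasurableSet.univ

lemma coupComp_apply (t s : Measure (X × X)) [IsFiniteMeasure s] [IsFiniteMeasure t]
    {A C : Set X} (hA : MeasurableSet A) (hC : MeasurableSet C) :
    coupComp t s (A ×ˢ C)
      = ∫⁻ y, (s.map Prod.swap).condKernel y A * t.condKernel y C ∂s.snd := by
  rw [coupComp, Measure.map_apply measurable_snd (hA.prod hC),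
    Measure.compProd_apply ((hA.prod hC).preimage measurable_snd)]
  refine lintegral_congr fun y => ?_
  have h1 : Prod.mk y ⁻¹' (Prod.snd ⁻¹' (A ×ˢ C)) = A ×ˢ C := rfl
  rw [h1, Kernel.prod_apply, Measure.prod_prod]

lemma lintegral_fk (t : Measure (X × X)) [IsFiniteMeasure t] {F : X × X → ℝ≥0∞}
    (hF : Measurable F) :
    ∫⁻ y, ∫⁻ z, F (y, z) ∂t.condKernel y ∂t.fst = ∫⁻ w, F w ∂t := by
  conv_rhs => rw [← t.disintegrate t.condKernel]
  rw [Measure.lintegral_compProd hF]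

lemma lintegral_bk (t : Measure (X × X)) [IsFiniteMeasure t] {F : X × X → ℝ≥0∞}
    (hF : Measurable F) :
    ∫⁻ z, ∫⁻ y, F (y, z) ∂(t.map Prod.swap).condKernel z ∂t.snd = ∫⁻ w, F w ∂t := by
  have hF' : Measurable fun w : X × X => F (w.2, w.1) := hF.comp measurable_swap
  have h2 := lintegral_fk (t.map Prod.swap) hF'
  rw [lintegral_map hF' measurable_swap, Measure.fst_map_swap] at h2
  simpa using h2

/-- Structural lemma: the composite coupling is the disintegration of the first marginal
by the composed conditional kernels. -/
lemma coupComp_eq_compProd (t s : Measure (X × X)) [IsFiniteMeasure s] [IsFiniteMeasure t] :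
    coupComp t s = s.fst.compProd (t.condKernel ∘ₖ s.condKernel) := by
  refine meas_prod_ext fun A C hA hC => ?_
  have hη : Measurable fun y => t.condKernel y C := Kernel.measurable_coe _ hC
  have hG : Measurable fun w : X × X =>
      A.indicator (1 : X → ℝ≥0∞) w.1 * t.condKernel w.2 C :=
    ((measurable_one.indicator hA).comp measurable_fst).mul (hη.comp measurable_snd)
  rw [coupComp_apply t s hA hC, Measure.compProd_apply (hA.prod hC)]
  have hL : ∫⁻ y, (s.map Prod.swap).condKernel y A * t.condKernel y C ∂s.snd
      = ∫⁻ w, A.indicator (1 : X → ℝ≥0∞) w.1 * t.condKernel w.2 C ∂s := by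
    rw [← lintegral_bk s hG]
    refine lintegral_congr fun y => ?_
    rw [mul_comm, ← lintegral_indicator_one hA,
      ← lintegral_const_mul _ (measurable_one.indicator hA)]
    exact lintegral_congr fun x => mul_comm _ _
  have hR : ∫⁻ x, (t.condKernel ∘ₖ s.condKernel) x (Prod.mk x ⁻¹' (A ×ˢ C)) ∂s.fst
      = ∫⁻ w, A.indicator (1 : X → ℝ≥0∞) w.1 * t.condKernel w.2 C ∂s := by
    rw [← lintegral_fk s hG]
    refine lintegral_congr fun x => ?_
    by_cases hx : x ∈ A
    · have hpre : Prod.mk x ⁻¹' (A ×ˢ C) = C := by ext z; simp [hx]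
      rw [hpre, Kernel.comp_apply' _ _ _ hC]
      simp [Set.indicator_of_mem hx]
    · have hpre : Prod.mk x ⁻¹' (A ×ˢ C) = ∅ := by ext z; simp [hx]
      rw [hpre]
      simp [Set.indicator_of_notMem hx]
  rw [hL, hR]

lemma coupComp_fst (t s : Measure (X × X)) [IsProbabilityMeasure s] [IsProbabilityMeasure t] :
    (coupComp t s).fst = s.fst := by
  rw [coupComp_eq_compProd t s, Measure.fst_compProd]

/-- The a.e. identification of the forward conditional kernel of a composite coupling. -/
lemma coupComp_condKernel_ae (t s : Measure (X × X)) [IsProbabilityMeasure s]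
    [IsProbabilityMeasure t] :
    ∀ᵐ y ∂s.fst, (t.condKernel ∘ₖ s.condKernel) y = (coupComp t s).condKernel y := by
  have h := eq_condKernel_of_measure_eq_compProd (ρ := coupComp t s)
    (t.condKernel ∘ₖ s.condKernel) (by rw [coupComp_fst t s]; exact coupComp_eq_compProd t s)
  rwa [coupComp_fst t s] at h

/-- Swapping a composite coupling. -/
lemma coupComp_map_swap (t s : Measure (X × X)) [IsProbabilityMeasure s] [IsProbabilityMeasure t]
    (h : t.fst = s.snd) :
    (coupComp t s).map Prod.swap = coupComp (s.map Prod.swap) (t.map Prod.swap) := by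
  refine (meas_prod_ext fun A C hA hC => ?_)
  rw [Measure.map_apply measurable_swap (hA.prod hC), Set.preimage_swap_prod,
    coupComp_apply _ _ hC hA, coupComp_apply _ _ hA hC]
  have h2 : (t.map Prod.swap).map Prod.swap = t := by
    rw [Measure.map_map measurable_swap measurable_swap]
    simp
  simp only [h2, Measure.snd_map_swap, h]
  exact lintegral_congr fun y => mul_comm _ _

/-- Composition of couplings is associative: `(u ∘ t) ∘ s = u ∘ (t ∘ s)`. -/
theorem coupComp_assoc (p q m n : Measure X)
    [IsProbabilityMeasure p] [IsProbabilityMeasure q]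
    [IsProbabilityMeasure m] [IsProbabilityMeasure n]
    (s t u : Measure (X × X))
    [IsProbabilityMeasure s] [IsProbabilityMeasure t] [IsProbabilityMeasure u]
    (hs1 : s.fst = p) (hs2 : s.snd = q) (ht1 : t.fst = q) (ht2 : t.snd = m)
    (hu1 : u.fst = m) (hu2 : u.snd = n) :
    coupComp (coupComp u t) s = coupComp u (coupComp t s) := by
  have hqt : t.fst = s.snd := by rw [ht1, hs2]
  set S := coupComp t s with hSdef
  set U := coupComp u t with hUdef
  have hSswap : S.map Prod.swap
      = t.snd.compProd ((s.map Prod.swap).condKernel ∘ₖ (t.map Prod.swap).condKernel) := by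
    rw [hSdef, coupComp_map_swap t s hqt, coupComp_eq_compProd, Measure.fst_map_swap]
  have hSsnd : S.snd = t.snd := by
    rw [← Measure.fst_map_swap, hSswap, Measure.fst_compProd]
  have hae2 : ∀ᵐ z ∂t.snd,
      ((s.map Prod.swap).condKernel ∘ₖ (t.map Prod.swap).condKernel) z
        = (S.map Prod.swap).condKernel z := by
    have hfst : (S.map Prod.swap).fst = t.snd := by rw [Measure.fst_map_swap, hSsnd]
    have h := eq_condKernel_of_measure_eq_compProd (ρ := S.map Prod.swap)
      ((s.map Prod.swap).condKernel ∘ₖ (t.map Prod.swap).condKernel)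
      (by rw [hfst]; exact hSswap)
    rwa [hfst] at h
  have hae1 : ∀ᵐ y ∂s.snd, (u.condKernel ∘ₖ t.condKernel) y = U.condKernel y := by
    have h := coupComp_condKernel_ae u t
    rwa [hqt] at h
  refine meas_prod_ext fun A C hA hC => ?_
  have hF : Measurable fun w : X × X =>
      (s.map Prod.swap).condKernel w.1 A * u.condKernel w.2 C :=
    ((Kernel.measurable_coe _ hA).comp measurable_fst).mul
      ((Kernel.measurable_coe _ hC).comp measurable_snd)
  have hLHS : coupComp U s (A ×ˢ C)
      = ∫⁻ w, (s.map Prod.swap).condKernel w.1 A * u.condKernel w.2 C ∂t := by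
    rw [coupComp_apply U s hA hC]
    have step1 : ∫⁻ y, (s.map Prod.swap).condKernel y A * U.condKernel y C ∂s.snd
        = ∫⁻ y, (s.map Prod.swap).condKernel y A * (u.condKernel ∘ₖ t.condKernel) y C ∂s.snd := by
      refine lintegral_congr_ae ?_
      filter_upwards [hae1] with y hy
      rw [hy]
    rw [step1, ← hqt, ← lintegral_fk t hF]
    refine lintegral_congr fun y => ?_
    rw [Kernel.comp_apply' _ _ _ hC, ← lintegral_const_mul _ (Kernel.measurable_coe _ hC)]
  have hRHS : coupComp u S (A ×ˢ C)
      = ∫⁻ w, (s.map Prod.swap).condKernel w.1 A * u.condKernel w.2 C ∂t := by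
    rw [coupComp_apply u S hA hC]
    have step1 : ∫⁻ z, (S.map Prod.swap).condKernel z A * u.condKernel z C ∂S.snd
        = ∫⁻ z, ((s.map Prod.swap).condKernel ∘ₖ (t.map Prod.swap).condKernel) z A
            * u.condKernel z C ∂t.snd := by
      rw [hSsnd]
      refine lintegral_congr_ae ?_
      filter_upwards [hae2] with z hz
      rw [hz]
    rw [step1, ← lintegral_bk t hF]
    refine lintegral_congr fun z => ?_
    rw [Kernel.comp_apply' _ _ _ hA, ← lintegral_mul_const _ (Kernel.measurable_coe _ hA)]
  rw [hLHS, hRHS]
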